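/- Let γ_AB be a bipartite state on ℂ^{d_A} ⊗ ℂ^{d_B}. If rank γ_AB < rank γ_A, then γ_AB is not separable. -/

import Mathlib

open Matrix Kronecker
open scoped ComplexOrder

noncomputable section

/-- `|v⟩⟨v|`, the rank-one matrix `v v*`. -/
def ketBra {d : ℕ} (v : Fin d → ℂ) : Matrix (Fin d) (Fin d) ℂ :=
  vecMulVec v (star v)

/-- Partial trace over the `B` factor: `(Tr_B γ)_{jk} = Σ_m γ_{(j,m),(k,m)}`. -/
def trB {dA dB : ℕ} (γ : Matrix (Fin dA × Fin dB) (Fin dA × Fin dB) ℂ) :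
    Matrix (Fin dA) (Fin dA) ℂ :=
  Matrix.of fun j k => ∑ m : Fin dB, γ (j, m) (k, m)

/-- Partial trace over the `A` factor: `(Tr_A γ)_{mn} = Σ_j γ_{(j,m),(j,n)}`. -/
def trA {dA dB : ℕ} (γ : Matrix (Fin dA × Fin dB) (Fin dA × Fin dB) ℂ) :
    Matrix (Fin dB) (Fin dB) ℂ :=
  Matrix.of fun m n => ∑ j : Fin dA, γ (j, m) (j, n)

/-- A positive semidefinite matrix indexed by `(Fin dA) × (Fin dB)` is separable if it is
a finite positive combination of Kronecker products `|a⟩⟨a| ⊗ |b⟩⟨b|`. -/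
def MatrixSeparable {dA dB : ℕ} (γ : Matrix (Fin dA × Fin dB) (Fin dA × Fin dB) ℂ) : Prop :=
  ∃ (n : ℕ) (lam : Fin n → ℝ) (a : Fin n → Fin dA → ℂ) (b : Fin n → Fin dB → ℂ),
    (∀ i, 0 ≤ lam i) ∧
      γ = ∑ i, (lam i : ℂ) • (ketBra (a i) ⊗ₖ ketBra (b i))

lemma core_span_le {N dA dB : ℕ} (α : Fin N → Fin dA → ℂ) (b : Fin N → Fin dB → ℂ)
    (c : Fin N → ℂ) (hc : ∀ i, c i ≠ 0 → b i ≠ 0) :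
    Module.finrank ℂ (Submodule.span ℂ (Set.range (fun i => c i • α i))) ≤
      Module.finrank ℂ
        (Submodule.span ℂ (Set.range (fun i (p : Fin dA × Fin dB) => α i p.1 * b i p.2))) := by
  classical
  set u : Fin N → (Fin dA → ℂ) := fun i => c i • α i with hu
  set w : Fin N → (Fin dA × Fin dB → ℂ) := fun i p => α i p.1 * b i p.2 with hw
  obtain ⟨s, hsub, hspan, hli⟩ := exists_linearIndependent ℂ (Set.range u)
  have hsfin : s.Finite := (Set.finite_range u).subset hsub
  haveI : Fintype s := hsfin.fintype
  have hchoice : ∀ x : s, ∃ i, u i = (x : Fin dA → ℂ) := fun x => hsub x.2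
  choose f hf using hchoice
  have hxne : ∀ x : s, (x : Fin dA → ℂ) ≠ 0 := fun x => hli.ne_zero x
  have hcf : ∀ x : s, c (f x) ≠ 0 := by
    intro x hx0
    apply hxne x
    rw [← hf x, hu]
    simp [hx0]
  have hαf : ∀ x : s, α (f x) = (c (f x))⁻¹ • (x : Fin dA → ℂ) := by
    intro x
    have h := hf x
    rw [hu] at h
    rw [← h, inv_smul_smul₀ (hcf x)]
  have hgli : LinearIndependent ℂ (fun x : s => w (f x)) := by
    rw [Fintype.linearIndependent_iff]
    intro coef h0 x
    have hrel : ∀ m : Fin dB, ∀ y : s, coef y * b (f y) m * (c (f y))⁻¹ = 0 := by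
      intro m
      refine Fintype.linearIndependent_iff.mp hli _ ?_
      funext j
      have h1 := congrFun h0 (j, m)
      simp only [Finset.sum_apply, Pi.smul_apply, Pi.zero_apply, smul_eq_mul] at h1 ⊢
      rw [← h1]
      apply Finset.sum_congr rfl
      intro y _
      have h2 := congrFun (hαf y) j
      simp only [Pi.smul_apply, smul_eq_mul] at h2
      show coef y * b (f y) m * (c (f y))⁻¹ * (y : Fin dA → ℂ) j
        = coef y * w (f y) (j, m)
      rw [hw]
      simp only [h2]
      ring
    have hbne : b (f x) ≠ 0 := hc _ (hcf x)
    obtain ⟨m, hm⟩ := Function.ne_iff.mp hbne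
    simp only [Pi.zero_apply] at hm
    simpa [mul_eq_zero, hm, hcf x] using hrel m x
  have hcard : Fintype.card s ≤ Module.finrank ℂ (Submodule.span ℂ (Set.range w)) := by
    haveI : Module.Finite ℂ (Submodule.span ℂ (Set.range w)) :=
      Module.Finite.span_of_finite ℂ (Set.finite_range w)
    have hg' : LinearIndependent ℂ (fun x : s =>
        (⟨w (f x), Submodule.subset_span ⟨f x, rfl⟩⟩ : Submodule.span ℂ (Set.range w))) :=
      LinearIndependent.of_comp (Submodule.span ℂ (Set.range w)).subtype hgli
    exact hg'.fintype_card_le_finrank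
  calc Module.finrank ℂ (Submodule.span ℂ (Set.range u))
      = Module.finrank ℂ (Submodule.span ℂ s) := by rw [hspan]
    _ = s.toFinset.card := finrank_span_set_eq_card hli
    _ = Fintype.card s := s.toFinset_card
    _ ≤ _ := hcard

/-- If a bipartite state `γ_AB` on `ℂ^{d_A} ⊗ ℂ^{d_B}` has
`rank γ_AB < rank γ_A`, then `γ_AB` is not separable. -/
theorem not_separable_of_rank_lt_rank_marginal {dA dB : ℕ}
    (γ : Matrix (Fin dA × Fin dB) (Fin dA × Fin dB) ℂ)
    (hpsd : γ.PosSemidef) (htr : γ.trace = 1)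
    (hrank : γ.rank < (trB γ).rank) :
    ¬ MatrixSeparable γ := by
  rintro ⟨n, lam, a, b, hlam, hγ⟩
  classical
  set α : Fin n → Fin dA → ℂ := fun i => (Real.sqrt (lam i) : ℂ) • a i with hα
  set w : Fin n → Fin dA × Fin dB → ℂ := fun i p => α i p.1 * b i p.2 with hw
  set nb : Fin n → ℝ := fun i => Real.sqrt (∑ m, Complex.normSq (b i m)) with hnb
  set u : Fin n → Fin dA → ℂ := fun i => ((nb i : ℝ) : ℂ) • α i with hu
  set W : Matrix (Fin dA × Fin dB) (Fin n) ℂ := Matrix.of fun p i => w i p with hW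
  set U : Matrix (Fin dA) (Fin n) ℂ := Matrix.of fun j i => u i j with hU
  -- γ = W * Wᴴ
  have hγW : γ = W * Wᴴ := by
    rw [hγ]
    ext p q
    rw [Matrix.mul_apply, Matrix.sum_apply]
    apply Finset.sum_congr rfl
    intro i _
    have h1 : ((Real.sqrt (lam i) : ℝ) : ℂ) * ((Real.sqrt (lam i) : ℝ) : ℂ) = (lam i : ℂ) := by
      rw [← Complex.ofReal_mul, Real.mul_self_sqrt (hlam i)]
    simp only [Matrix.smul_apply, kroneckerMap_apply, ketBra, vecMulVec_apply, Pi.star_apply,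
      hW, Matrix.of_apply, conjTranspose_apply, hw, hα, Pi.smul_apply, smul_eq_mul,
      _root_.map_mul, Complex.conj_ofReal, RCLike.star_def]
    rw [← h1]
    ring
  -- trB γ = U * Uᴴ
  have htB : trB γ = U * Uᴴ := by
    rw [hγ]
    ext j k
    rw [Matrix.mul_apply]
    show (∑ m : Fin dB, (∑ i, (lam i : ℂ) • (ketBra (a i) ⊗ₖ ketBra (b i))) (j, m) (k, m)) = _
    have h2 : ∀ i, ((nb i : ℝ) : ℂ) * ((nb i : ℝ) : ℂ)
        = ∑ m : Fin dB, b i m * (starRingEnd ℂ) (b i m) := by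
      intro i
      rw [hnb, ← Complex.ofReal_mul,
        Real.mul_self_sqrt (Finset.sum_nonneg fun m _ => Complex.normSq_nonneg _)]
      push_cast
      apply Finset.sum_congr rfl
      intro m _
      rw [Complex.mul_conj]
    simp only [Matrix.sum_apply, Matrix.smul_apply, kroneckerMap_apply, ketBra,
      vecMulVec_apply, Pi.star_apply, RCLike.star_def, smul_eq_mul]
    rw [Finset.sum_comm]
    refine Finset.sum_congr rfl fun i _ => ?_
    have h1 : ((Real.sqrt (lam i) : ℝ) : ℂ) * ((Real.sqrt (lam i) : ℝ) : ℂ) = (lam i : ℂ) := by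
      rw [← Complex.ofReal_mul, Real.mul_self_sqrt (hlam i)]
    simp only [hU, Matrix.of_apply, conjTranspose_apply, hu, hα, Pi.smul_apply,
      smul_eq_mul, RCLike.star_def, _root_.map_mul, Complex.conj_ofReal]
    trans ((lam i : ℂ) * (a i j * (starRingEnd ℂ) (a i k)) *
      ∑ m : Fin dB, b i m * (starRingEnd ℂ) (b i m))
    · rw [Finset.mul_sum]
      refine Finset.sum_congr rfl fun m _ => ?_
      ring
    · rw [← h2 i, ← h1]
      ring
  -- rank comparison
  have hWrank : γ.rank = W.rank := by rw [hγW, rank_self_mul_conjTranspose]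
  have hUrank : (trB γ).rank = U.rank := by rw [htB, rank_self_mul_conjTranspose]
  have hcore : U.rank ≤ W.rank := by
    rw [rank_eq_finrank_span_cols, rank_eq_finrank_span_cols]
    have hUT : U.col = u := by ext i j; rfl
    have hWT : W.col = w := by ext i p; rfl
    rw [hUT, hWT]
    refine core_span_le α b (fun i => ((nb i : ℝ) : ℂ)) ?_
    intro i hci hb0
    exact hci (by simp [hnb, hb0])
  rw [hWrank, hUrank] at hrank
  omega
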